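/- (Sum-rank Hartmann–Tzeng bound) Let C ⊆ F^n be a nonzero cyclic-skew-cyclic code and let b, δ, r, t_1, t_2 be integers with gcd(n, t_1) = 1 and gcd(n, t_2) < δ. Let a ∈ K be a primitive ℓ-th root of unity and β a normal element of L/K. If for all 0 ≤ i ≤ δ−2 and 0 ≤ s ≤ r the pair (a^{b+i t_1+s t_2}, σ^{i t_1+s t_2}(β)) lies in the defining set T_C, then d_SR(C) ≥ δ + r. -/

import Mathlib

set_option linter.unusedSectionVars false
open Module Finset

section HTAux
variable {K L : Type*} [Field K] [Field L] [Algebra K L] [IsGalois K L] [FiniteDimensional K L]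

/-- an element fixed by every `K`-automorphism lies in (the image of) `K`. -/
lemma ht_mem_range_of_fixed (x : L) (hx : ∀ τ : L ≃ₐ[K] L, τ x = x) :
    ∃ y : K, algebraMap K L y = x := by
  have h1 : IntermediateField.fixingSubgroup (⊥ : IntermediateField K L) = ⊤ := by
    ext τ
    simp only [Subgroup.mem_top, iff_true]
    intro y
    rcases IntermediateField.mem_bot.mp y.2 with ⟨k, hk⟩
    exact hk ▸ τ.commutes k
  have h2 := IsGalois.fixedField_fixingSubgroup (⊥ : IntermediateField K L)
  rw [h1] at h2
  have hm : x ∈ IntermediateField.fixedField (⊤ : Subgroup (L ≃ₐ[K] L)) := fun τ => hx τ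
  rw [h2] at hm
  exact IntermediateField.mem_bot.mp hm

lemma ht_fix_zpow (f : L ≃ₐ[K] L) (x : L) (h : f x = x) (z : ℤ) : (f ^ z) x = x := by
  have hn : ∀ n : ℕ, (f ^ n) x = x := by
    intro n
    induction n with
    | zero => rfl
    | succ n ih => rw [pow_succ, AlgEquiv.mul_apply, h, ih]
  induction z using Int.rec with
  | ofNat n => simpa using hn n
  | negSucc n =>
      have h2 : (f ^ (n+1)) ((f ^ (n+1))⁻¹ x) = (f ^ (n+1)) x := by
        rw [hn (n+1)]
        have := AlgEquiv.mul_apply (f ^ (n+1)) (f ^ (n+1))⁻¹ x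
        rw [mul_inv_cancel] at this
        exact this.symm
      have h3 := (f ^ (n+1)).injective h2
      rw [zpow_negSucc, h3]

/-- if `x` is fixed by `σ ^ t` where `t` is coprime to the order of the (cyclic) group,
then `x` is fixed by everything. -/
lemma ht_fixed_coprime (σ : L ≃ₐ[K] L) (hσgen : ∀ τ : L ≃ₐ[K] L, τ ∈ Subgroup.zpowers σ)
    (t : ℤ) (ht : Int.gcd (Fintype.card (L ≃ₐ[K] L) : ℤ) t = 1)
    (x : L) (hx : (σ ^ t) x = x) : ∃ y : K, algebraMap K L y = x := by
  apply ht_mem_range_of_fixed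
  have hcard : (σ : L ≃ₐ[K] L) ^ (Fintype.card (L ≃ₐ[K] L) : ℤ) = 1 := by
    rw [zpow_natCast]; exact pow_card_eq_one
  -- σ x = x
  have hσx : σ x = x := by
    obtain ⟨u, v, huv⟩ := Int.isCoprime_iff_gcd_eq_one.mpr ht
    have : σ = (σ ^ t) ^ v * (σ ^ (Fintype.card (L ≃ₐ[K] L) : ℤ)) ^ u := by
      rw [← zpow_mul, ← zpow_mul, ← zpow_add]
      rw [show t * v + (Fintype.card (L ≃ₐ[K] L) : ℤ) * u = u * (Fintype.card (L ≃ₐ[K] L) : ℤ) + v * t by ring, huv, zpow_one]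
    rw [this, AlgEquiv.mul_apply, hcard, one_zpow]
    simp only [AlgEquiv.one_apply]
    exact ht_fix_zpow (σ ^ t) x hx v
  intro τ
  obtain ⟨z, hz⟩ := hσgen τ
  rw [← hz]
  exact ht_fix_zpow σ x hσx z

end HTAux

section Norm
variable {K L : Type*} [Field K] [Field L] [Algebra K L] [IsGalois K L] [FiniteDimensional K L]

lemma ht_eigen_dvd {ℓ : ℕ} [NeZero ℓ] {a : K}
    (hA : IsPrimitiveRoot (algebraMap K L a) ℓ)
    (σ' : L ≃ₐ[K] L) (ξ : L) (hξ : ξ ≠ 0) (d : ℤ)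
    (h : σ' ξ = (algebraMap K L a) ^ d * ξ) :
    (ℓ : ℤ) ∣ d * (Fintype.card (L ≃ₐ[K] L)) := by
  set A := algebraMap K L a with hAdef
  have hA0 : A ≠ 0 := hA.ne_zero (NeZero.ne ℓ)
  have ha0 : a ≠ 0 := by
    intro h0; apply hA0; rw [hAdef, h0, map_zero]
  set N := ∏ τ : L ≃ₐ[K] L, τ ξ with hN
  have hfix : ∀ τ : L ≃ₐ[K] L, τ (A ^ d) = A ^ d := by
    intro τ
    rw [hAdef, ← map_zpow₀ (algebraMap K L) a d, τ.commutes]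
  have h1 : ∏ τ : L ≃ₐ[K] L, τ (σ' ξ) = N := by
    rw [hN, ← Equiv.prod_comp (Equiv.mulRight σ') (fun τ => τ ξ)]
    apply Finset.prod_congr rfl
    intro τ _
    simp [AlgEquiv.mul_apply]
  have h2 : ∏ τ : L ≃ₐ[K] L, τ (σ' ξ) = A ^ (d * (Fintype.card (L ≃ₐ[K] L))) * N := by
    calc ∏ τ : L ≃ₐ[K] L, τ (σ' ξ) = ∏ τ : L ≃ₐ[K] L, (A ^ d * τ ξ) := by
          apply Finset.prod_congr rfl; intro τ _
          rw [h, map_mul, hfix τ]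
      _ = (A ^ d) ^ (Fintype.card (L ≃ₐ[K] L)) * N := by
          rw [Finset.prod_mul_distrib, Finset.prod_const, Finset.card_univ]
      _ = A ^ (d * (Fintype.card (L ≃ₐ[K] L))) * N := by
          rw [← zpow_natCast (A ^ d), ← zpow_mul]
  have hNne : N ≠ 0 := by
    rw [hN]
    apply Finset.prod_ne_zero_iff.mpr
    intro τ _
    intro h0
    exact hξ (by simpa using τ.injective (by simpa using h0))
  have h3 : A ^ (d * (Fintype.card (L ≃ₐ[K] L) : ℤ)) = 1 := by
    have hh : A ^ (d * (Fintype.card (L ≃ₐ[K] L))) * N = 1 * N := by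
      rw [one_mul, ← h2, h1]
    have := mul_right_cancel₀ hNne hh
    exact_mod_cast this
  exact (hA.zpow_eq_one_iff_dvd _).mp h3

end Norm

section HTCore
variable {K L : Type*} [Field K] [Field L] [Algebra K L] [IsGalois K L] [FiniteDimensional K L]
variable {ℓ : ℕ} [NeZero ℓ] {a : K}

lemma ht_aeq_ne_zero (f : L ≃ₐ[K] L) {y : L} (hy : y ≠ 0) : f y ≠ 0 := by
  intro h0
  exact hy (by simpa using f.injective (by simpa using h0))

lemma ht_dvd_cancel (hlm : Nat.Coprime ℓ (Fintype.card (L ≃ₐ[K] L)))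
    (t d : ℤ) (hdvd : (ℓ : ℤ) ∣ t * d * (Fintype.card (L ≃ₐ[K] L))) : (ℓ : ℤ) ∣ t * d := by
  have hcop : IsCoprime (ℓ : ℤ) ((Fintype.card (L ≃ₐ[K] L) : ℕ) : ℤ) := by
    rw [Int.isCoprime_iff_gcd_eq_one]
    exact_mod_cast hlm
  exact hcop.dvd_of_dvd_mul_right hdvd

lemma ht_eigen_fin (σ : L ≃ₐ[K] L)
    (hA : IsPrimitiveRoot (algebraMap K L a) ℓ)
    (hlm : Nat.Coprime ℓ (Fintype.card (L ≃ₐ[K] L)))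
    (t : ℤ) (htl : Int.gcd ℓ t = 1) (h h' : Fin ℓ) (ξ : L) (hξ : ξ ≠ 0)
    (heq : (σ ^ t) ξ = (algebraMap K L a) ^ (t * ((h : ℤ) - (h' : ℤ))) * ξ) : h = h' := by
  have h1 := ht_eigen_dvd hA (σ ^ t) ξ hξ _ heq
  have h2 : (ℓ : ℤ) ∣ t * ((h : ℤ) - (h' : ℤ)) := ht_dvd_cancel hlm t _ h1
  have hcop : IsCoprime (ℓ : ℤ) t := by
    rw [Int.isCoprime_iff_gcd_eq_one]; exact htl
  have h3 : (ℓ : ℤ) ∣ ((h : ℤ) - (h' : ℤ)) := hcop.dvd_of_dvd_mul_left h2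
  have h4 : (h : ℤ) - (h' : ℤ) = 0 := by
    rcases h3 with ⟨q, hq⟩
    have hh := h.isLt
    have hh' := h'.isLt
    have hq0 : q = 0 := by
      rcases lt_trichotomy q 0 with hlt | he | hgt
      · nlinarith [hq, Int.ofNat_lt.mpr hh, Int.ofNat_lt.mpr hh']
      · exact he
      · nlinarith [hq, Int.ofNat_lt.mpr hh, Int.ofNat_lt.mpr hh']
    rw [hq, hq0, mul_zero]
  have : (h : ℤ) = (h' : ℤ) := by linarith
  exact Fin.ext (by exact_mod_cast this)

end HTCore
section HTBase
variable {K L : Type*} [Field K] [Field L] [Algebra K L] [IsGalois K L] [FiniteDimensional K L]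
variable {ℓ : ℕ} [NeZero ℓ] {a : K}

lemma ht_base (σ : L ≃ₐ[K] L) (hσgen : ∀ τ : L ≃ₐ[K] L, τ ∈ Subgroup.zpowers σ)
    (hA : IsPrimitiveRoot (algebraMap K L a) ℓ)
    (hlm : Nat.Coprime ℓ (Fintype.card (L ≃ₐ[K] L)))
    (t : ℤ) (htl : Int.gcd ℓ t = 1) (htm : Int.gcd (Fintype.card (L ≃ₐ[K] L)) t = 1) :
    ∀ (E : ℕ) (w : Fin ℓ → ℕ) (x γ : (h : Fin ℓ) → Fin (w h) → L),
    (∀ h, LinearIndependent K (γ h)) →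
    (∃ S : Finset ((_ : Fin ℓ) × ℕ), S.card ≤ E ∧
       ∀ h : Fin ℓ, ∀ k : Fin (w h), (⟨h, (k : ℕ)⟩ : (_ : Fin ℓ) × ℕ) ∉ S → x h k = 0) →
    (∀ i : ℕ, i < E → ∑ h : Fin ℓ, ∑ k : Fin (w h),
        x h k * (algebraMap K L a) ^ ((i : ℤ) * t * (h : ℤ)) * (σ ^ ((i : ℤ) * t)) (γ h k) = 0) →
    ∀ h k, x h k = 0 := by
  set A := algebraMap K L a with hAdef
  have hA0 : A ≠ 0 := hA.ne_zero (NeZero.ne ℓ)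
  intro E
  induction E with
  | zero =>
      intro w x γ hind hS hG h k
      obtain ⟨S, hScard, hSsupp⟩ := hS
      have : S = ∅ := Finset.card_eq_zero.mp (Nat.le_zero.mp hScard)
      exact hSsupp h k (by simp [this])
  | succ E ih =>
      intro w x γ hind hS hG
      by_contra hall
      push_neg at hall
      obtain ⟨h', k', hx'⟩ := hall
      obtain ⟨S, hScard, hSsupp⟩ := hS
      set xs := x h' k' with hxs
      set ν := (σ ^ t) xs * xs⁻¹ * A ^ (-(t * (h' : ℤ))) with hν
      have hν0 : ν ≠ 0 := by
        apply mul_ne_zero (mul_ne_zero (ht_aeq_ne_zero _ hx') (inv_ne_zero hx'))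
        exact zpow_ne_zero _ hA0
      set x2 : (h : Fin ℓ) → Fin (w h) → L :=
        fun h k => (σ ^ t) (x h k) - ν * A ^ (t * (h : ℤ)) * x h k with hx2
      set γ2 : (h : Fin ℓ) → Fin (w h) → L := fun h k => (σ ^ t) (γ h k) with hγ2
      have hfixA : ∀ z : ℤ, (σ ^ t) (A ^ z) = A ^ z := by
        intro z
        rw [hAdef, ← map_zpow₀ (algebraMap K L) a z]
        exact (σ ^ t).commutes _
      -- the new system satisfies the equations
      have hG2 : ∀ i : ℕ, i < E → ∑ h : Fin ℓ, ∑ k : Fin (w h),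
          x2 h k * A ^ ((i : ℤ) * t * (h : ℤ)) * (σ ^ ((i : ℤ) * t)) (γ2 h k) = 0 := by
        intro i hi
        have e1 := hG i (Nat.lt_succ_of_lt hi)
        have e2 := hG (i + 1) (Nat.succ_lt_succ hi)
        have key : ∀ h : Fin ℓ, ∀ k : Fin (w h),
            x2 h k * A ^ ((i : ℤ) * t * (h : ℤ)) * (σ ^ ((i : ℤ) * t)) (γ2 h k)
            = (σ ^ t) (x h k * A ^ ((i : ℤ) * t * (h : ℤ)) * (σ ^ ((i : ℤ) * t)) (γ h k))
              - ν * (x h k * A ^ (((i : ℕ) + 1 : ℤ) * t * (h : ℤ))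
                      * (σ ^ (((i : ℕ) + 1 : ℤ) * t)) (γ h k)) := by
          intro h k
          have c1 : (σ ^ t) ((σ ^ ((i : ℤ) * t)) (γ h k)) = (σ ^ ((i : ℤ) * t)) (γ2 h k) := by
            rw [hγ2, ← AlgEquiv.mul_apply, ← AlgEquiv.mul_apply, ← zpow_add, ← zpow_add, add_comm]
          have c2 : A ^ (((i : ℕ) + 1 : ℤ) * t * (h : ℤ))
              = A ^ ((i : ℤ) * t * (h : ℤ)) * A ^ (t * (h : ℤ)) := by
            rw [← zpow_add₀ hA0]; ring_nf
          have c3 : (σ ^ (((i : ℕ) + 1 : ℤ) * t)) (γ h k)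
              = (σ ^ ((i : ℤ) * t)) (γ2 h k) := by
            rw [hγ2, ← AlgEquiv.mul_apply, ← zpow_add]; ring_nf
          rw [map_mul, map_mul, hfixA, c1, c2, c3, hx2]
          ring
        calc ∑ h : Fin ℓ, ∑ k : Fin (w h),
              x2 h k * A ^ ((i : ℤ) * t * (h : ℤ)) * (σ ^ ((i : ℤ) * t)) (γ2 h k)
            = ∑ h : Fin ℓ, ∑ k : Fin (w h),
              ((σ ^ t) (x h k * A ^ ((i : ℤ) * t * (h : ℤ)) * (σ ^ ((i : ℤ) * t)) (γ h k))
               - ν * (x h k * A ^ (((i : ℕ) + 1 : ℤ) * t * (h : ℤ))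
                      * (σ ^ (((i : ℕ) + 1 : ℤ) * t)) (γ h k))) := by
              exact Finset.sum_congr rfl fun h _ => Finset.sum_congr rfl fun k _ => key h k
          _ = (σ ^ t) (∑ h : Fin ℓ, ∑ k : Fin (w h),
                x h k * A ^ ((i : ℤ) * t * (h : ℤ)) * (σ ^ ((i : ℤ) * t)) (γ h k))
              - ν * ∑ h : Fin ℓ, ∑ k : Fin (w h),
                x h k * A ^ (((i : ℕ) + 1 : ℤ) * t * (h : ℤ))
                  * (σ ^ (((i : ℕ) + 1 : ℤ) * t)) (γ h k) := by
              rw [map_sum, Finset.mul_sum, ← Finset.sum_sub_distrib]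
              refine Finset.sum_congr rfl fun h _ => ?_
              rw [map_sum, Finset.mul_sum, ← Finset.sum_sub_distrib]
          _ = 0 := by
              rw [e1]
              have e2' : ∑ h : Fin ℓ, ∑ k : Fin (w h),
                  x h k * A ^ (((i : ℕ) + 1 : ℤ) * t * (h : ℤ))
                    * (σ ^ (((i : ℕ) + 1 : ℤ) * t)) (γ h k) = 0 := by
                have := e2
                push_cast at this ⊢
                convert this using 4 <;> ring_nf
              rw [e2', map_zero, mul_zero, sub_zero]
      -- new support
      have hS2 : ∃ S2 : Finset ((_ : Fin ℓ) × ℕ), S2.card ≤ E ∧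
          ∀ h : Fin ℓ, ∀ k : Fin (w h), (⟨h, (k : ℕ)⟩ : (_ : Fin ℓ) × ℕ) ∉ S2 → x2 h k = 0 := by
        classical
        refine ⟨S.erase ⟨h', (k' : ℕ)⟩, ?_, ?_⟩
        · have hmem : (⟨h', (k' : ℕ)⟩ : (_ : Fin ℓ) × ℕ) ∈ S := by
            by_contra hmem
            exact hx' (hSsupp h' k' hmem)
          rw [Finset.card_erase_of_mem hmem]
          omega
        · intro h k hk
          by_cases hp : (⟨h, (k : ℕ)⟩ : (_ : Fin ℓ) × ℕ) = ⟨h', (k' : ℕ)⟩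
          · -- this is the starred column: x2 vanishes there by choice of ν
            have hh : h = h' := congrArg Sigma.fst hp
            subst hh
            have hkk : k = k' := by
              have := congrArg Sigma.snd hp
              simp only at this
              exact Fin.ext this
            subst hkk
            show (σ ^ t) (x h k) - ν * A ^ (t * (h : ℤ)) * x h k = 0
            have hAA : A ^ (-(t * (h : ℤ))) * A ^ (t * (h : ℤ)) = 1 := by
              rw [← zpow_add₀ hA0]; simp
            calc (σ ^ t) (x h k) - ν * A ^ (t * (h : ℤ)) * x h k
                = (σ ^ t) (x h k) - (σ ^ t) (x h k) * ((x h k)⁻¹ * x h k)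
                    * (A ^ (-(t * (h : ℤ))) * A ^ (t * (h : ℤ))) := by rw [hν]; ring
              _ = 0 := by rw [inv_mul_cancel₀ hx', hAA]; ring
          · have hxhk : x h k = 0 := by
              apply hSsupp h k
              intro hmem
              exact hk (Finset.mem_erase.mpr ⟨hp, hmem⟩)
            rw [hx2]
            simp [hxhk]
      have hind2 : ∀ h, LinearIndependent K (γ2 h) := by
        intro h
        exact (hind h).map' (σ ^ t).toLinearMap (LinearMap.ker_eq_bot.mpr (σ ^ t).injective)
      have hzero2 := ih w x2 γ2 hind2 hS2 hG2
      -- the eigen-relations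
      have R : ∀ h : Fin ℓ, ∀ k : Fin (w h),
          (σ ^ t) (x h k) = ν * A ^ (t * (h : ℤ)) * x h k := by
        intro h k
        have := hzero2 h k
        rw [hx2] at this
        simp only at this
        exact sub_eq_zero.mp this
      -- all support is concentrated at h'
      have step1 : ∀ h : Fin ℓ, ∀ k : Fin (w h), x h k ≠ 0 → h = h' := by
        intro h k hxk
        have hξ : x h k * xs⁻¹ ≠ 0 := mul_ne_zero hxk (inv_ne_zero hx')
        apply ht_eigen_fin σ hA hlm t htl h h' _ hξ
        rw [map_mul, map_inv₀, R h k, R h' k', ← hxs]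
        have hz1 : A ^ (t * ((h : ℤ) - (h' : ℤ))) = A ^ (t * (h : ℤ)) * (A ^ (t * (h' : ℤ)))⁻¹ := by
          rw [← zpow_neg, ← zpow_add₀ hA0]; ring_nf
        have hz2 : A ^ (t * (h : ℤ)) ≠ 0 := zpow_ne_zero _ hA0
        have hz3 : A ^ (t * (h' : ℤ)) ≠ 0 := zpow_ne_zero _ hA0
        rw [hz1]
        field_simp
      have step2 : ∀ k : Fin (w h'), ∃ y : K, algebraMap K L y = x h' k * xs⁻¹ := by
        intro k
        apply ht_fixed_coprime σ hσgen t htm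
        rw [map_mul, map_inv₀, R h' k, R h' k', ← hxs]
        have hz3 : A ^ (t * (h' : ℤ)) ≠ 0 := zpow_ne_zero _ hA0
        field_simp
      choose κ hκ using step2
      have hG0' : ∑ h : Fin ℓ, ∑ k : Fin (w h), x h k * γ h k = 0 := by
        have h0 := hG 0 (by omega)
        simpa using h0
      have hsum : ∑ k : Fin (w h'), x h' k * γ h' k = 0 := by
        rw [Finset.sum_eq_single h'] at hG0'
        · exact hG0'
        · intro b _ hb
          apply Finset.sum_eq_zero
          intro k _
          have : x b k = 0 := by
            by_contra hxb
            exact hb (step1 b k hxb)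
          rw [this, zero_mul]
        · intro hmem
          exact absurd (Finset.mem_univ h') hmem
      have hka : ∀ k : Fin (w h'), x h' k = algebraMap K L (κ k) * xs := by
        intro k
        rw [hκ k]
        field_simp
      have hsum2 : ∑ k : Fin (w h'), κ k • γ h' k = 0 := by
        have : xs * ∑ k : Fin (w h'), algebraMap K L (κ k) * γ h' k = 0 := by
          rw [Finset.mul_sum, ← hsum]
          refine Finset.sum_congr rfl fun k _ => ?_
          rw [hka k]; ring
        have h2 := (mul_eq_zero.mp this).resolve_left hx'
        rw [← h2]
        refine Finset.sum_congr rfl fun k _ => ?_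
        rw [Algebra.smul_def]
      have hk0 : ∀ k, κ k = 0 := by
        have hlin := Fintype.linearIndependent_iff.mp (hind h')
        exact hlin κ hsum2
      have hone : (1 : L) = 0 := by
        have e1 : algebraMap K L (κ k') = 1 := by
          rw [hκ k', hxs]
          exact mul_inv_cancel₀ hx'
        rw [← e1, hk0 k', map_zero]
      exact one_ne_zero hone
end HTBase
section HTHelp

lemma ht_gcd_mul {p q j : ℕ} (h : Nat.Coprime p q) :
    Nat.gcd (p * q) j = Nat.gcd p j * Nat.gcd q j := by
  apply Nat.dvd_antisymm
  · have h1 : Nat.gcd (p * q) j ∣ Nat.gcd (Nat.gcd (p * q) j) p * Nat.gcd (Nat.gcd (p * q) j) q :=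
      Nat.dvd_gcd_mul_gcd_iff_dvd_mul.mpr (Nat.gcd_dvd_left _ _)
    refine h1.trans (mul_dvd_mul ?_ ?_)
    · exact Nat.dvd_gcd (Nat.gcd_dvd_right _ _) ((Nat.gcd_dvd_left _ _).trans (Nat.gcd_dvd_right _ _))
    · exact Nat.dvd_gcd (Nat.gcd_dvd_right _ _) ((Nat.gcd_dvd_left _ _).trans (Nat.gcd_dvd_right _ _))
  · have hcop : Nat.Coprime (Nat.gcd p j) (Nat.gcd q j) :=
      Nat.Coprime.coprime_dvd_left (Nat.gcd_dvd_left _ _)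
        (Nat.Coprime.coprime_dvd_right (Nat.gcd_dvd_left _ _) h)
    apply Nat.Coprime.mul_dvd_of_dvd_of_dvd hcop
    · exact Nat.dvd_gcd (Dvd.dvd.mul_right (Nat.gcd_dvd_left _ _) q) (Nat.gcd_dvd_right _ _)
    · exact Nat.dvd_gcd (Dvd.dvd.mul_left (Nat.gcd_dvd_left _ _) p) (Nat.gcd_dvd_right _ _)

lemma ht_fin_eq_of_dvd {ℓ : ℕ} (h h' : Fin ℓ) (hdvd : (ℓ : ℤ) ∣ (h : ℤ) - (h' : ℤ)) : h = h' := by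
  have h4 : (h : ℤ) - (h' : ℤ) = 0 := by
    rcases hdvd with ⟨q, hq⟩
    have hh := h.isLt
    have hh' := h'.isLt
    have hq0 : q = 0 := by
      rcases lt_trichotomy q 0 with hlt | he | hgt
      · nlinarith [hq, Int.ofNat_lt.mpr hh, Int.ofNat_lt.mpr hh']
      · exact he
      · nlinarith [hq, Int.ofNat_lt.mpr hh, Int.ofNat_lt.mpr hh']
    rw [hq, hq0, mul_zero]
  have : (h : ℤ) = (h' : ℤ) := by linarith
  exact Fin.ext (by exact_mod_cast this)

lemma ht_div_sub {ℓ : ℕ} (hℓ : 0 < ℓ) (t d : ℤ) (hdvd : (ℓ : ℤ) ∣ t * d) :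
    ((ℓ / Nat.gcd ℓ t.natAbs : ℕ) : ℤ) ∣ d := by
  set g := Nat.gcd ℓ t.natAbs with hg
  have hg0 : 0 < g := Nat.gcd_pos_of_pos_left _ hℓ
  have hgl : g ∣ ℓ := Nat.gcd_dvd_left _ _
  have hgt : g ∣ t.natAbs := Nat.gcd_dvd_right _ _
  have hnat : ℓ ∣ t.natAbs * d.natAbs := by
    have h1 : ℓ ∣ (t * d).natAbs := Int.natCast_dvd.mp hdvd
    rwa [Int.natAbs_mul] at h1
  have hcop : Nat.Coprime (ℓ / g) (t.natAbs / g) := Nat.coprime_div_gcd_div_gcd hg0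
  have h2 : ℓ / g ∣ (t.natAbs / g) * d.natAbs := by
    have h3 : g * (ℓ / g) ∣ g * ((t.natAbs / g) * d.natAbs) := by
      rw [Nat.mul_div_cancel' hgl, ← mul_assoc, Nat.mul_div_cancel' hgt]
      exact hnat
    exact (Nat.mul_dvd_mul_iff_left hg0).mp h3
  have h4 : ℓ / g ∣ d.natAbs := hcop.dvd_of_dvd_mul_left h2
  exact Int.dvd_natAbs.mp (Int.natCast_dvd_natCast.mpr h4)

lemma ht_count {ℓ : ℕ} (hℓ : 0 < ℓ) (g2 : ℕ) (hg : g2 ∣ ℓ) (hg0 : 0 < g2) (h' : Fin ℓ)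
    (S₀ : Finset (Fin ℓ))
    (hmem : ∀ h ∈ S₀, ((ℓ / g2 : ℕ) : ℤ) ∣ (h : ℤ) - (h' : ℤ)) : S₀.card ≤ g2 := by
  set ℓ' := ℓ / g2 with hℓ'
  have hℓ'0 : 0 < ℓ' := Nat.div_pos (Nat.le_of_dvd hℓ hg) hg0
  have hmul : g2 * ℓ' = ℓ := Nat.mul_div_cancel' hg
  have key : ∀ h : Fin ℓ, h ∈ S₀ →
      (((h : ℤ) - (h' : ℤ)) % (ℓ : ℤ)).toNat < ℓ ∧ ℓ' ∣ (((h : ℤ) - (h' : ℤ)) % (ℓ : ℤ)).toNat := by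
    intro h hh
    have hpos : (0 : ℤ) < (ℓ : ℤ) := by exact_mod_cast hℓ
    have hnn : 0 ≤ ((h : ℤ) - (h' : ℤ)) % (ℓ : ℤ) := Int.emod_nonneg _ (by positivity)
    have hlt : ((h : ℤ) - (h' : ℤ)) % (ℓ : ℤ) < (ℓ : ℤ) := Int.emod_lt_of_pos _ hpos
    constructor
    · rw [← Nat.cast_lt (α := ℤ), Int.toNat_of_nonneg hnn]
      exact hlt
    · have hd1 : (ℓ' : ℤ) ∣ ((h : ℤ) - (h' : ℤ)) % (ℓ : ℤ) := by
        rw [Int.emod_def]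
        apply dvd_sub (hmem h hh)
        exact Dvd.dvd.mul_right (by exact_mod_cast (Nat.div_dvd_of_dvd hg : (ℓ':ℕ) ∣ ℓ)) _
      have h6 := Int.natCast_dvd.mp hd1
      have h5 : (((h : ℤ) - (h' : ℤ)) % (ℓ : ℤ)).natAbs = (((h : ℤ) - (h' : ℤ)) % (ℓ : ℤ)).toNat := by
        omega
      rwa [h5] at h6
  have hmaps : ∀ h ∈ S₀, (fun h : Fin ℓ => (((h : ℤ) - (h' : ℤ)) % (ℓ : ℤ)).toNat / ℓ') h
      ∈ Finset.range g2 := by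
    intro h hh
    rw [Finset.mem_range]
    obtain ⟨hlt, _⟩ := key h hh
    rw [Nat.div_lt_iff_lt_mul hℓ'0]
    exact hlt.trans_eq hmul.symm
  have hinj : Set.InjOn (fun h : Fin ℓ => (((h : ℤ) - (h' : ℤ)) % (ℓ : ℤ)).toNat / ℓ') S₀ := by
    intro h₁ hh₁ h₂ hh₂ heq
    obtain ⟨_, hd₁⟩ := key h₁ hh₁
    obtain ⟨_, hd₂⟩ := key h₂ hh₂
    simp only at heq
    have e1 : (((h₁ : ℤ) - (h' : ℤ)) % (ℓ : ℤ)).toNat = (((h₂ : ℤ) - (h' : ℤ)) % (ℓ : ℤ)).toNat := by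
      rw [← Nat.div_mul_cancel hd₁, ← Nat.div_mul_cancel hd₂, heq]
    apply ht_fin_eq_of_dvd
    have e2 : ((h₁ : ℤ) - (h' : ℤ)) % (ℓ : ℤ) = ((h₂ : ℤ) - (h' : ℤ)) % (ℓ : ℤ) := by
      have hnn1 : 0 ≤ ((h₁ : ℤ) - (h' : ℤ)) % (ℓ : ℤ) := Int.emod_nonneg _ (by positivity)
      have hnn2 : 0 ≤ ((h₂ : ℤ) - (h' : ℤ)) % (ℓ : ℤ) := Int.emod_nonneg _ (by positivity)
      omega
    have e3 : ((h₁ : ℤ) - (h₂ : ℤ)) % (ℓ : ℤ) = 0 := by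
      have := Int.sub_emod ((h₁ : ℤ) - (h' : ℤ)) ((h₂ : ℤ) - (h' : ℤ)) (ℓ : ℤ)
      rw [e2] at this
      simp only [sub_self, Int.zero_emod] at this
      have e4 : (h₁ : ℤ) - (h' : ℤ) - ((h₂ : ℤ) - (h' : ℤ)) = (h₁ : ℤ) - (h₂ : ℤ) := by ring
      rwa [e4] at this
    exact Int.dvd_of_emod_eq_zero e3
  calc S₀.card ≤ (Finset.range g2).card := Finset.card_le_card_of_injOn _ hmaps hinj
    _ = g2 := Finset.card_range g2

end HTHelp
section HTField
variable {K L : Type*} [Field K] [Field L] [Algebra K L] [IsGalois K L] [FiniteDimensional K L]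

lemma ht_fixedField_finrank (σ : L ≃ₐ[K] L) (hσgen : ∀ τ : L ≃ₐ[K] L, τ ∈ Subgroup.zpowers σ)
    (t : ℤ) :
    Module.finrank K (IntermediateField.fixedField (Subgroup.zpowers (σ ^ t)))
      = Nat.gcd (Fintype.card (L ≃ₐ[K] L)) t.natAbs := by
  classical
  have hσm : orderOf σ = Fintype.card (L ≃ₐ[K] L) :=
    (orderOf_eq_card_of_forall_mem_zpowers hσgen).trans Nat.card_eq_fintype_card
  set m := Fintype.card (L ≃ₐ[K] L) with hm
  have hord : orderOf (σ ^ t) = m / Nat.gcd m t.natAbs := by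
    set j := t.natAbs with hj
    rcases Int.natAbs_eq t with he | he
    · rw [he, zpow_natCast, orderOf_pow, hσm]
    · rw [he, zpow_neg, zpow_natCast, orderOf_inv, orderOf_pow, hσm]
  have hcardH : Fintype.card (Subgroup.zpowers (σ ^ t)) = m / Nat.gcd m t.natAbs := by
    rw [Fintype.card_zpowers, hord]
  have h1 : Module.finrank (IntermediateField.fixedField (Subgroup.zpowers (σ ^ t))) L
      = m / Nat.gcd m t.natAbs := by
    rw [IntermediateField.finrank_fixedField_eq_card, Nat.card_eq_fintype_card, hcardH]
  have h2 : Module.finrank K (IntermediateField.fixedField (Subgroup.zpowers (σ ^ t)))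
      * (m / Nat.gcd m t.natAbs) = m := by
    rw [← h1, Module.finrank_mul_finrank, ← IsGalois.card_aut_eq_finrank, Nat.card_eq_fintype_card]
  have hg : Nat.gcd m t.natAbs ∣ m := Nat.gcd_dvd_left _ _
  have hm0 : 0 < m := Fintype.card_pos
  have hq0 : 0 < m / Nat.gcd m t.natAbs :=
    Nat.div_pos (Nat.le_of_dvd hm0 hg) (Nat.gcd_pos_of_pos_left _ hm0)
  have h3 := Nat.mul_div_cancel' hg
  exact Nat.eq_of_mul_eq_mul_right hq0 (h2.trans h3.symm)

lemma ht_span_finrank_le (F2 : IntermediateField K L) (c : L) {n : ℕ} (v : Fin n → L)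
    (hv : ∀ k, ∃ y, y ∈ F2 ∧ v k = c * y) :
    Module.finrank K (Submodule.span K (Set.range v)) ≤ Module.finrank K F2 := by
  classical
  set W : Submodule K L := Subalgebra.toSubmodule F2.toSubalgebra with hW
  have hle : Submodule.span K (Set.range v) ≤ Submodule.map (LinearMap.mulLeft K c) W := by
    rw [Submodule.span_le]
    rintro _ ⟨k, rfl⟩
    obtain ⟨y, hy, hvk⟩ := hv k
    exact ⟨y, hy, by simp [hvk]⟩
  calc Module.finrank K (Submodule.span K (Set.range v))
      ≤ Module.finrank K (Submodule.map (LinearMap.mulLeft K c) W) := Submodule.finrank_mono hle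
    _ ≤ Module.finrank K W := Submodule.finrank_map_le _ _
    _ = Module.finrank K F2 := rfl
end HTField
section HTre
variable {K L : Type*} [Field K] [Field L] [Algebra K L] [FiniteDimensional K L]

lemma ht_reencode {n : ℕ} (x γ : Fin n → L) (hγ : LinearIndependent K γ) :
    ∃ y γ2 : Fin (Module.finrank K (Submodule.span K (Set.range x))) → L,
      LinearIndependent K γ2 ∧ (∀ e, y e ≠ 0) ∧
      ∀ (f : L ≃ₐ[K] L) (c : L), ∑ k, x k * c * f (γ k) = ∑ e, y e * c * f (γ2 e) := by
  classical
  set U := Submodule.span K (Set.range x) with hU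
  set d := Module.finrank K U with hd
  set bas : Basis (Fin d) K U := Module.finBasis K U with hbas
  have hmem : ∀ k, x k ∈ U := fun k => Submodule.subset_span ⟨k, rfl⟩
  set u : Fin n → U := fun k => ⟨x k, hmem k⟩ with hu
  refine ⟨fun e => (bas e : L), fun e => ∑ k, (bas.repr (u k) e) • γ k, ?_, ?_, ?_⟩
  · rw [Fintype.linearIndependent_iff]
    intro μ hμ
    have h1 : ∑ k, (∑ e, μ e * (bas.repr (u k) e)) • γ k = 0 := by
      calc ∑ k, (∑ e, μ e * (bas.repr (u k) e)) • γ k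
          = ∑ k, ∑ e, (μ e * bas.repr (u k) e) • γ k := by
            refine Finset.sum_congr rfl fun k _ => ?_
            rw [Finset.sum_smul]
        _ = ∑ e, ∑ k, (μ e * bas.repr (u k) e) • γ k := Finset.sum_comm
        _ = ∑ e, μ e • ∑ k, (bas.repr (u k) e) • γ k := by
            refine Finset.sum_congr rfl fun e _ => ?_
            rw [Finset.smul_sum]
            refine Finset.sum_congr rfl fun k _ => ?_
            rw [smul_smul]
        _ = 0 := hμ
    have h2 : ∀ k, ∑ e, μ e * bas.repr (u k) e = 0 :=
      Fintype.linearIndependent_iff.mp hγ _ h1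
    set φ : U →ₗ[K] K := ∑ e, μ e • bas.coord e with hφdef
    have hφu : ∀ k, φ (u k) = 0 := by
      intro k
      rw [hφdef, LinearMap.sum_apply]
      simp only [LinearMap.smul_apply, Basis.coord_apply, smul_eq_mul]
      exact h2 k
    have hφ : ∀ uu : U, φ uu = 0 := by
      intro uu
      obtain ⟨cc, hcc⟩ := (Submodule.mem_span_range_iff_exists_fun K).mp
        (show (uu : L) ∈ Submodule.span K (Set.range x) from uu.2)
      have huu : uu = ∑ k, cc k • u k := by
        apply Subtype.ext
        rw [← hcc]
        simp [hu]
      rw [huu, map_sum]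
      simp only [map_smul, hφu, smul_eq_mul, mul_zero]
      exact Finset.sum_const_zero
    intro e
    have h3 := hφ (bas e)
    rw [hφdef, LinearMap.sum_apply] at h3
    simp only [LinearMap.smul_apply, Basis.coord_apply, Basis.repr_self, smul_eq_mul] at h3
    rwa [Finset.sum_eq_single e (fun b _ hb => by
        rw [Finsupp.single_apply, if_neg (fun hh => hb hh.symm)]; ring)
        (fun hmem => absurd (Finset.mem_univ e) hmem), Finsupp.single_apply, if_pos rfl,
        mul_one] at h3
  · intro e
    have := bas.ne_zero e
    intro h0
    exact this (Subtype.ext (by simpa using h0))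
  · intro f c
    have key : ∀ k, x k = ∑ e, (bas.repr (u k) e) • (bas e : L) := by
      intro k
      have := bas.sum_repr (u k)
      calc x k = ((u k : U) : L) := rfl
        _ = ∑ e, (bas.repr (u k) e) • (bas e : L) := by
            conv_lhs => rw [← this]
            rw [Submodule.coe_sum]; rfl
    calc ∑ k, x k * c * f (γ k)
        = ∑ k, ∑ e, ((bas.repr (u k) e) • (bas e : L)) * c * f (γ k) := by
          refine Finset.sum_congr rfl fun k _ => ?_
          rw [← Finset.sum_mul, ← Finset.sum_mul, ← key k]
      _ = ∑ e, ∑ k, ((bas.repr (u k) e) • (bas e : L)) * c * f (γ k) := Finset.sum_comm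
      _ = ∑ e, (bas e : L) * c * f (∑ k, (bas.repr (u k) e) • γ k) := by
          refine Finset.sum_congr rfl fun e _ => ?_
          rw [map_sum]
          rw [Finset.mul_sum]
          refine Finset.sum_congr rfl fun k _ => ?_
          rw [map_smul]
          rw [Algebra.smul_def, Algebra.smul_def]
          ring
end HTre
section HTMain
variable {K L : Type*} [Field K] [Field L] [Algebra K L] [IsGalois K L] [FiniteDimensional K L]
variable {ℓ : ℕ} [NeZero ℓ] {a : K}

lemma ht_main (σ : L ≃ₐ[K] L) (hσgen : ∀ τ : L ≃ₐ[K] L, τ ∈ Subgroup.zpowers σ)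
    (hA : IsPrimitiveRoot (algebraMap K L a) ℓ)
    (hlm : Nat.Coprime ℓ (Fintype.card (L ≃ₐ[K] L)))
    (t₁ t₂ : ℤ) (h1l : Int.gcd ℓ t₁ = 1) (h1m : Int.gcd (Fintype.card (L ≃ₐ[K] L)) t₁ = 1)
    (δ : ℕ)
    (hδ : Nat.gcd ℓ t₂.natAbs * Nat.gcd (Fintype.card (L ≃ₐ[K] L)) t₂.natAbs < δ) :
    ∀ (r : ℕ) (w : Fin ℓ → ℕ) (x γ : (h : Fin ℓ) → Fin (w h) → L),
    (∀ h, LinearIndependent K (γ h)) →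
    (∃ S : Finset ((_ : Fin ℓ) × ℕ), S.card < δ + r ∧
       ∀ h : Fin ℓ, ∀ k : Fin (w h), (⟨h, (k : ℕ)⟩ : (_ : Fin ℓ) × ℕ) ∉ S → x h k = 0) →
    (∀ i s : ℕ, i + 2 ≤ δ → s ≤ r → ∑ h : Fin ℓ, ∑ k : Fin (w h),
        x h k * (algebraMap K L a) ^ (((i : ℤ) * t₁ + (s : ℤ) * t₂) * (h : ℤ))
          * (σ ^ ((i : ℤ) * t₁ + (s : ℤ) * t₂)) (γ h k) = 0) →
    ∀ h k, x h k = 0 := by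
  set A := algebraMap K L a with hAdef
  have hA0 : A ≠ 0 := hA.ne_zero (NeZero.ne ℓ)
  have hℓ0 : 0 < ℓ := Nat.pos_of_ne_zero (NeZero.ne ℓ)
  intro r
  induction r with
  | zero =>
      intro w x γ hind hS hG
      obtain ⟨S, hScard, hSsupp⟩ := hS
      apply ht_base σ hσgen hA hlm t₁ h1l h1m (δ - 1) w x γ hind ⟨S, by omega, hSsupp⟩
      intro i hi
      have h0 := hG i 0 (by omega) (Nat.zero_le _)
      simpa using h0
  | succ r ih =>
      intro w x γ hind hS hG
      by_contra hall
      push_neg at hall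
      obtain ⟨h', k', hx'⟩ := hall
      obtain ⟨S, hScard, hSsupp⟩ := hS
      set xs := x h' k' with hxs
      set ν := (σ ^ t₂) xs * xs⁻¹ * A ^ (-(t₂ * (h' : ℤ))) with hν
      have hν0 : ν ≠ 0 := by
        apply mul_ne_zero (mul_ne_zero (ht_aeq_ne_zero _ hx') (inv_ne_zero hx'))
        exact zpow_ne_zero _ hA0
      set x2 : (h : Fin ℓ) → Fin (w h) → L :=
        fun h k => (σ ^ t₂) (x h k) - ν * A ^ (t₂ * (h : ℤ)) * x h k with hx2
      set γ2 : (h : Fin ℓ) → Fin (w h) → L := fun h k => (σ ^ t₂) (γ h k) with hγ2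
      have hfixA : ∀ z : ℤ, (σ ^ t₂) (A ^ z) = A ^ z := by
        intro z
        rw [hAdef, ← map_zpow₀ (algebraMap K L) a z]
        exact (σ ^ t₂).commutes _
      have hG2 : ∀ i s : ℕ, i + 2 ≤ δ → s ≤ r → ∑ h : Fin ℓ, ∑ k : Fin (w h),
          x2 h k * A ^ (((i : ℤ) * t₁ + (s : ℤ) * t₂) * (h : ℤ))
            * (σ ^ ((i : ℤ) * t₁ + (s : ℤ) * t₂)) (γ2 h k) = 0 := by
        intro i s hi hs
        have e1 := hG i s hi (by omega)
        have e2' : ∑ h : Fin ℓ, ∑ k : Fin (w h),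
            x h k * A ^ (((i : ℤ) * t₁ + ((s : ℤ) + 1) * t₂) * (h : ℤ))
              * (σ ^ ((i : ℤ) * t₁ + ((s : ℤ) + 1) * t₂)) (γ h k) = 0 := by
          have := hG i (s + 1) hi (by omega)
          have hc : ((s + 1 : ℕ) : ℤ) = (s : ℤ) + 1 := by push_cast; ring
          rwa [hc] at this
        have key : ∀ h : Fin ℓ, ∀ k : Fin (w h),
            x2 h k * A ^ (((i : ℤ) * t₁ + (s : ℤ) * t₂) * (h : ℤ))
              * (σ ^ ((i : ℤ) * t₁ + (s : ℤ) * t₂)) (γ2 h k)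
            = (σ ^ t₂) (x h k * A ^ (((i : ℤ) * t₁ + (s : ℤ) * t₂) * (h : ℤ))
                * (σ ^ ((i : ℤ) * t₁ + (s : ℤ) * t₂)) (γ h k))
              - ν * (x h k * A ^ (((i : ℤ) * t₁ + ((s : ℤ) + 1) * t₂) * (h : ℤ))
                * (σ ^ ((i : ℤ) * t₁ + ((s : ℤ) + 1) * t₂)) (γ h k)) := by
          intro h k
          have c1 : (σ ^ t₂) ((σ ^ ((i : ℤ) * t₁ + (s : ℤ) * t₂)) (γ h k))
              = (σ ^ ((i : ℤ) * t₁ + (s : ℤ) * t₂)) (γ2 h k) := by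
            rw [hγ2, ← AlgEquiv.mul_apply, ← AlgEquiv.mul_apply, ← zpow_add, ← zpow_add, add_comm]
          have c2 : A ^ (((i : ℤ) * t₁ + ((s : ℤ) + 1) * t₂) * (h : ℤ))
              = A ^ (((i : ℤ) * t₁ + (s : ℤ) * t₂) * (h : ℤ)) * A ^ (t₂ * (h : ℤ)) := by
            rw [← zpow_add₀ hA0]; ring_nf
          have c3 : (σ ^ ((i : ℤ) * t₁ + ((s : ℤ) + 1) * t₂)) (γ h k)
              = (σ ^ ((i : ℤ) * t₁ + (s : ℤ) * t₂)) (γ2 h k) := by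
            rw [hγ2, ← AlgEquiv.mul_apply, ← zpow_add]; ring_nf
          rw [map_mul, map_mul, hfixA, c1, c2, c3, hx2]
          ring
        calc ∑ h : Fin ℓ, ∑ k : Fin (w h),
              x2 h k * A ^ (((i : ℤ) * t₁ + (s : ℤ) * t₂) * (h : ℤ))
                * (σ ^ ((i : ℤ) * t₁ + (s : ℤ) * t₂)) (γ2 h k)
            = ∑ h : Fin ℓ, ∑ k : Fin (w h),
              ((σ ^ t₂) (x h k * A ^ (((i : ℤ) * t₁ + (s : ℤ) * t₂) * (h : ℤ))
                * (σ ^ ((i : ℤ) * t₁ + (s : ℤ) * t₂)) (γ h k))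
               - ν * (x h k * A ^ (((i : ℤ) * t₁ + ((s : ℤ) + 1) * t₂) * (h : ℤ))
                * (σ ^ ((i : ℤ) * t₁ + ((s : ℤ) + 1) * t₂)) (γ h k))) := by
              exact Finset.sum_congr rfl fun h _ => Finset.sum_congr rfl fun k _ => key h k
          _ = (σ ^ t₂) (∑ h : Fin ℓ, ∑ k : Fin (w h),
                x h k * A ^ (((i : ℤ) * t₁ + (s : ℤ) * t₂) * (h : ℤ))
                  * (σ ^ ((i : ℤ) * t₁ + (s : ℤ) * t₂)) (γ h k))
              - ν * ∑ h : Fin ℓ, ∑ k : Fin (w h),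
                x h k * A ^ (((i : ℤ) * t₁ + ((s : ℤ) + 1) * t₂) * (h : ℤ))
                  * (σ ^ ((i : ℤ) * t₁ + ((s : ℤ) + 1) * t₂)) (γ h k) := by
              rw [map_sum, Finset.mul_sum, ← Finset.sum_sub_distrib]
              refine Finset.sum_congr rfl fun h _ => ?_
              rw [map_sum, Finset.mul_sum, ← Finset.sum_sub_distrib]
          _ = 0 := by rw [e1, e2', map_zero, mul_zero, sub_zero]
      have hS2 : ∃ S2 : Finset ((_ : Fin ℓ) × ℕ), S2.card < δ + r ∧
          ∀ h : Fin ℓ, ∀ k : Fin (w h), (⟨h, (k : ℕ)⟩ : (_ : Fin ℓ) × ℕ) ∉ S2 → x2 h k = 0 := by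
        classical
        refine ⟨S.erase ⟨h', (k' : ℕ)⟩, ?_, ?_⟩
        · have hmem : (⟨h', (k' : ℕ)⟩ : (_ : Fin ℓ) × ℕ) ∈ S := by
            by_contra hmem
            exact hx' (hSsupp h' k' hmem)
          rw [Finset.card_erase_of_mem hmem]
          omega
        · intro h k hk
          by_cases hp : (⟨h, (k : ℕ)⟩ : (_ : Fin ℓ) × ℕ) = ⟨h', (k' : ℕ)⟩
          · have hh : h = h' := congrArg Sigma.fst hp
            subst hh
            have hkk : k = k' := by
              have := congrArg Sigma.snd hp
              simp only at this
              exact Fin.ext this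
            subst hkk
            show (σ ^ t₂) (x h k) - ν * A ^ (t₂ * (h : ℤ)) * x h k = 0
            have hAA : A ^ (-(t₂ * (h : ℤ))) * A ^ (t₂ * (h : ℤ)) = 1 := by
              rw [← zpow_add₀ hA0]; simp
            calc (σ ^ t₂) (x h k) - ν * A ^ (t₂ * (h : ℤ)) * x h k
                = (σ ^ t₂) (x h k) - (σ ^ t₂) (x h k) * ((x h k)⁻¹ * x h k)
                    * (A ^ (-(t₂ * (h : ℤ))) * A ^ (t₂ * (h : ℤ))) := by rw [hν]; ring
              _ = 0 := by rw [inv_mul_cancel₀ hx', hAA]; ring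
          · have hxhk : x h k = 0 := by
              apply hSsupp h k
              intro hmem
              exact hk (Finset.mem_erase.mpr ⟨hp, hmem⟩)
            rw [hx2]
            simp [hxhk]
      have hind2 : ∀ h, LinearIndependent K (γ2 h) := by
        intro h
        exact (hind h).map' (σ ^ t₂).toLinearMap (LinearMap.ker_eq_bot.mpr (σ ^ t₂).injective)
      have hzero2 := ih w x2 γ2 hind2 hS2 hG2
      have R : ∀ h : Fin ℓ, ∀ k : Fin (w h),
          (σ ^ t₂) (x h k) = ν * A ^ (t₂ * (h : ℤ)) * x h k := by
        intro h k
        have := hzero2 h k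
        rw [hx2] at this
        simp only at this
        exact sub_eq_zero.mp this
      -- ===== endgame =====
      classical
      set F2 := IntermediateField.fixedField (Subgroup.zpowers (σ ^ t₂)) with hF2
      have hF2rank : Module.finrank K F2
          = Nat.gcd (Fintype.card (L ≃ₐ[K] L)) t₂.natAbs := ht_fixedField_finrank σ hσgen t₂
      set w2 : Fin ℓ → ℕ :=
        fun h => Module.finrank K (Submodule.span K (Set.range (x h))) with hw2
      have hratio : ∀ h : Fin ℓ, ∀ k0 : Fin (w h), x h k0 ≠ 0 → ∀ k : Fin (w h),
          ∃ y, y ∈ F2 ∧ x h k = x h k0 * y := by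
        intro h k0 hk0 k
        refine ⟨(x h k0)⁻¹ * x h k, ?_, by field_simp⟩
        have hfixz : (σ ^ t₂) ((x h k0)⁻¹ * x h k) = (x h k0)⁻¹ * x h k := by
          rw [map_mul, map_inv₀, R h k, R h k0]
          have hz1 : A ^ (t₂ * (h : ℤ)) ≠ 0 := zpow_ne_zero _ hA0
          field_simp
        rintro ⟨ϕ, z, rfl⟩
        exact ht_fix_zpow (σ ^ t₂) _ hfixz z
      have hw2le : ∀ h : Fin ℓ, (∃ k, x h k ≠ 0) →
          w2 h ≤ Nat.gcd (Fintype.card (L ≃ₐ[K] L)) t₂.natAbs := by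
        rintro h ⟨k0, hk0⟩
        rw [hw2, ← hF2rank]
        exact ht_span_finrank_le F2 (x h k0) (x h) (hratio h k0 hk0)
      have hw2zero : ∀ h : Fin ℓ, ¬(∃ k, x h k ≠ 0) → w2 h = 0 := by
        intro h hno
        push_neg at hno
        have hsp : Submodule.span K (Set.range (x h)) = ⊥ := by
          rw [Submodule.span_eq_bot]
          rintro _ ⟨k, rfl⟩
          exact hno k
        rw [hw2]
        exact Submodule.finrank_eq_zero.mpr hsp
      set S₀ : Finset (Fin ℓ) := Finset.univ.filter (fun h => ∃ k, x h k ≠ 0) with hS₀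
      have hS₀card : S₀.card ≤ Nat.gcd ℓ t₂.natAbs := by
        apply ht_count hℓ0 _ (Nat.gcd_dvd_left _ _) (Nat.gcd_pos_of_pos_left _ hℓ0) h' S₀
        intro h hh
        obtain ⟨k, hk⟩ := (Finset.mem_filter.mp hh).2
        have hξ : x h k * xs⁻¹ ≠ 0 := mul_ne_zero hk (inv_ne_zero hx')
        have heig : (σ ^ t₂) (x h k * xs⁻¹)
            = A ^ (t₂ * ((h : ℤ) - (h' : ℤ))) * (x h k * xs⁻¹) := by
          rw [map_mul, map_inv₀, R h k, R h' k', ← hxs]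
          have hz1 : A ^ (t₂ * ((h : ℤ) - (h' : ℤ)))
              = A ^ (t₂ * (h : ℤ)) * (A ^ (t₂ * (h' : ℤ)))⁻¹ := by
            rw [← zpow_neg, ← zpow_add₀ hA0]; ring_nf
          have hz2 : A ^ (t₂ * (h : ℤ)) ≠ 0 := zpow_ne_zero _ hA0
          have hz3 : A ^ (t₂ * (h' : ℤ)) ≠ 0 := zpow_ne_zero _ hA0
          rw [hz1]
          field_simp
        have hdvd := ht_eigen_dvd hA (σ ^ t₂) _ hξ _ heig
        have hdvd2 := ht_dvd_cancel hlm t₂ _ hdvd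
        exact ht_div_sub hℓ0 t₂ _ hdvd2
      have htot : ∑ h : Fin ℓ, w2 h < δ := by
        have hzero : ∀ h ∈ Finset.univ \ S₀, w2 h = 0 := by
          intro h hh
          apply hw2zero
          rcases Finset.mem_sdiff.mp hh with ⟨_, hnot⟩
          intro hex
          exact hnot (Finset.mem_filter.mpr ⟨Finset.mem_univ h, hex⟩)
        have e1 : ∑ h : Fin ℓ, w2 h = ∑ h ∈ S₀, w2 h := by
          rw [← Finset.sum_subset (Finset.subset_univ S₀)]
          intro h hh hnot
          exact hzero h (Finset.mem_sdiff.mpr ⟨hh, hnot⟩)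
        have e2 : ∑ h ∈ S₀, w2 h
            ≤ S₀.card * Nat.gcd (Fintype.card (L ≃ₐ[K] L)) t₂.natAbs := by
          rw [← smul_eq_mul]
          apply Finset.sum_le_card_nsmul
          intro h hh
          exact hw2le h (Finset.mem_filter.mp hh).2
        calc ∑ h : Fin ℓ, w2 h ≤ S₀.card * Nat.gcd (Fintype.card (L ≃ₐ[K] L)) t₂.natAbs := by
              rw [e1]; exact e2
          _ ≤ Nat.gcd ℓ t₂.natAbs * Nat.gcd (Fintype.card (L ≃ₐ[K] L)) t₂.natAbs :=
              Nat.mul_le_mul_right _ hS₀card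
          _ < δ := hδ
      choose y gg2 hindy hy0 hkey using fun h => ht_reencode (x h) (γ h) (hind h)
      have hGy : ∀ i : ℕ, i < δ - 1 → ∑ h : Fin ℓ, ∑ e : Fin (w2 h),
          y h e * A ^ ((i : ℤ) * t₁ * (h : ℤ)) * (σ ^ ((i : ℤ) * t₁)) (gg2 h e) = 0 := by
        intro i hi
        have h0 := hG i 0 (by omega) (Nat.zero_le _)
        have h0' : ∑ h : Fin ℓ, ∑ k : Fin (w h),
            x h k * A ^ ((i : ℤ) * t₁ * (h : ℤ)) * (σ ^ ((i : ℤ) * t₁)) (γ h k) = 0 := by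
          simpa using h0
        rw [← h0']
        refine Finset.sum_congr rfl fun h _ => ?_
        exact (hkey h (σ ^ ((i : ℤ) * t₁)) (A ^ ((i : ℤ) * t₁ * (h : ℤ)))).symm
      have hbase := ht_base σ hσgen hA hlm t₁ h1l h1m (δ - 1) w2 y gg2 hindy
        ⟨Finset.univ.sigma (fun h => Finset.range (w2 h)), ?_, ?_⟩ hGy
      · -- contradiction: y h' 0 = 0 but y never vanishes
        have hw2h' : 0 < w2 h' := by
          by_contra h0
          push_neg at h0
          have h00 : w2 h' = 0 := by omega
          rw [hw2] at h00
          have hsp := Submodule.finrank_eq_zero.mp h00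
          have : xs ∈ (⊥ : Submodule K L) := by
            rw [← hsp]
            exact Submodule.subset_span ⟨k', rfl⟩
          exact hx' (by simpa using this)
        exact hy0 h' ⟨0, hw2h'⟩ (hbase h' ⟨0, hw2h'⟩)
      · -- card bound
        rw [Finset.card_sigma]
        simp only [Finset.card_range]
        omega
      · -- support: everything is inside
        intro h k hk
        exfalso
        apply hk
        rw [Finset.mem_sigma]
        exact ⟨Finset.mem_univ h, Finset.mem_range.mpr k.isLt⟩
end HTMain


/-- The rank weight of a vector over `F` with respect to the extension `F/E`. -/
noncomputable def rankWt (E : Type*) {F : Type*} [Field E] [Field F] [Algebra E F]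
    {N : ℕ} (v : Fin N → F) : ℕ :=
  Module.finrank E (Submodule.span E (Set.range v) : Submodule E F)

/-- The sum-rank weight w.r.t. the partition `(m,…,m)` and the extension `F/E`. -/
noncomputable def srWt (E : Type*) {F : Type*} [Field E] [Field F] [Algebra E F]
    {ℓ m : ℕ} (c : Fin ℓ → Fin m → F) : ℕ :=
  ∑ i, rankWt E (c i)

/-- `(a, β) ∈ K × L*` lies in the defining set `T_C` of the cyclic-skew-cyclic
code `C ⊆ F^{ℓm}`: every codeword `c = (c^{(0)}|…|c^{(ℓ-1)})` of `C` satisfies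
`Σ_h Σ_t c^{(h)}_t σ^t(β) a^h = 0` in `L`. -/
def inDefiningSet {F K L : Type*} [Field F] [Field K] [Field L]
    [Algebra F L] [Algebra K L] (σ : L ≃ₐ[K] L) {ℓ m : ℕ}
    (C : Submodule F (Fin ℓ → Fin m → F)) (a : K) (β : L) : Prop :=
  ∀ c ∈ C, ∑ h : Fin ℓ, ∑ t : Fin m,
    algebraMap F L (c h t) * (σ ^ (t : ℕ)) β * (algebraMap K L a) ^ (h : ℕ) = 0

/-- **Sum-rank Hartmann–Tzeng bound.** If the defining set of a
nonzero cyclic-skew-cyclic code `C ⊆ F^n`, `n = ℓm`, contains all the pairs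
`(a^{b+it₁+st₂}, σ^{it₁+st₂}(β))` for `0 ≤ i ≤ δ-2`, `0 ≤ s ≤ r`, where
`gcd(n,t₁) = 1` and `gcd(n,t₂) < δ`, then `d_SR(C) ≥ δ + r`. -/
theorem sumRank_HartmannTzeng_bound
    -- the tower of fields E ⊆ F, K ⊆ L = FK with F/E of degree m, K/E of degree h
    (E F K L : Type*) [Field E] [Field F] [Field K] [Field L]
    [Algebra E F] [Algebra E K] [Algebra E L] [Algebra F L] [Algebra K L]
    [IsScalarTower E F L] [IsScalarTower E K L]
    (m h ℓ : ℕ) [NeZero m] [NeZero ℓ]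
    (hFE : Module.finrank E F = m) (hKE : Module.finrank E K = h)
    (hcap : Set.range (algebraMap F L) ∩ Set.range (algebraMap K L)
      = Set.range (algebraMap E L))
    (hcomp : Algebra.adjoin K (Set.range (algebraMap F L)) = ⊤)
    -- L/K cyclic Galois of degree m with generator σ
    [IsGalois K L] (hLK : Module.finrank K L = m)
    (σ : L ≃ₐ[K] L) (hσgen : ∀ τ : L ≃ₐ[K] L, τ ∈ Subgroup.zpowers σ)
    -- θ = σ|_F has order m and fixed field E
    (θ : F ≃+* F) (hθσ : ∀ x : F, σ (algebraMap F L x) = algebraMap F L (θ x))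
    (hθord : orderOf θ = m)
    (hθfix : {x : F | θ x = x} = Set.range (algebraMap E F))
    -- ℓ coprime with m and with the characteristic of K
    (hlm : Nat.Coprime ℓ m) (hchar : (ℓ : K) ≠ 0)
    -- a nonzero cyclic-skew-cyclic code C ⊆ F^n, n = ℓm
    (C : Submodule F (Fin ℓ → Fin m → F)) (hC : C ≠ ⊥)
    (hρ : ∀ c ∈ C, (fun i => c (i - 1)) ∈ C)
    (hφ : ∀ c ∈ C, (fun i j => θ (c i (j - 1))) ∈ C)
    -- the integers b, δ, r, t₁, t₂ with gcd(n,t₁)=1 and gcd(n,t₂)<δ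
    (b t₁ t₂ : ℤ) (δ r : ℕ)
    (hgcd1 : Int.gcd (ℓ * m : ℤ) t₁ = 1)
    (hgcd2 : Int.gcd (ℓ * m : ℤ) t₂ < δ)
    -- a primitive ℓ-th root of unity a ∈ K and a normal element β of L/K
    (a : K) (ha : IsPrimitiveRoot a ℓ) (β : L)
    (hβ : ∃ bb : Basis (Fin m) K L, ∀ t : Fin m, bb t = (σ ^ (t : ℕ)) β)
    -- the Hartmann–Tzeng condition on the defining set
    (hdef : ∀ (i : ℕ), (i : ℤ) ≤ (δ : ℤ) - 2 → ∀ (s : ℕ), s ≤ r →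
      inDefiningSet σ C (a ^ (b + i * t₁ + s * t₂)) ((σ ^ (i * t₁ + s * t₂ : ℤ)) β)) :
    ∀ c ∈ C, c ≠ 0 → δ + r ≤ srWt E c := by
  classical
  intro c hcC hc0
  by_contra hlt
  push_neg at hlt
  -- basic instances and facts
  have hm0 : 0 < m := Nat.pos_of_ne_zero (NeZero.ne m)
  have hℓ0 : 0 < ℓ := Nat.pos_of_ne_zero (NeZero.ne ℓ)
  haveI : FiniteDimensional K L := FiniteDimensional.of_finrank_pos (hLK ▸ hm0)
  haveI : FiniteDimensional E F := FiniteDimensional.of_finrank_pos (hFE ▸ hm0)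
  have hcard : Fintype.card (L ≃ₐ[K] L) = m := Nat.card_eq_fintype_card.symm.trans ((IsGalois.card_aut_eq_finrank K L).trans hLK)
  have hA : IsPrimitiveRoot (algebraMap K L a) ℓ :=
    ha.map_of_injective (algebraMap K L).injective
  have hlm' : Nat.Coprime ℓ (Fintype.card (L ≃ₐ[K] L)) := by rw [hcard]; exact hlm
  have hgcdnat1 : Nat.gcd (ℓ * m) t₁.natAbs = 1 := by
    have : Int.gcd (ℓ * m : ℤ) t₁ = Nat.gcd (ℓ * m) t₁.natAbs := by
      unfold Int.gcd
      rw [Int.natAbs_mul]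
      simp
    rw [← this]; exact hgcd1
  have h1l : Int.gcd (ℓ : ℤ) t₁ = 1 := by
    have hdvd : Nat.gcd ℓ t₁.natAbs ∣ Nat.gcd (ℓ * m) t₁.natAbs :=
      Nat.dvd_gcd ((Nat.gcd_dvd_left _ _).trans (dvd_mul_right ℓ m)) (Nat.gcd_dvd_right _ _)
    have : Nat.gcd ℓ t₁.natAbs = 1 := Nat.dvd_one.mp (hgcdnat1 ▸ hdvd)
    unfold Int.gcd
    simpa using this
  have h1m : Int.gcd (Fintype.card (L ≃ₐ[K] L) : ℤ) t₁ = 1 := by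
    have hdvd : Nat.gcd m t₁.natAbs ∣ Nat.gcd (ℓ * m) t₁.natAbs :=
      Nat.dvd_gcd ((Nat.gcd_dvd_left _ _).trans (dvd_mul_left m ℓ)) (Nat.gcd_dvd_right _ _)
    have : Nat.gcd m t₁.natAbs = 1 := Nat.dvd_one.mp (hgcdnat1 ▸ hdvd)
    unfold Int.gcd
    rw [hcard]
    simpa using this
  have hδ' : Nat.gcd ℓ t₂.natAbs * Nat.gcd (Fintype.card (L ≃ₐ[K] L)) t₂.natAbs < δ := by
    have e1 : Int.gcd (ℓ * m : ℤ) t₂ = Nat.gcd (ℓ * m) t₂.natAbs := by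
      unfold Int.gcd
      rw [Int.natAbs_mul]
      simp
    rw [hcard, ← ht_gcd_mul hlm, ← e1]
    exact hgcd2
  -- ===== setup =====
  obtain ⟨bb, hbb⟩ := hβ
  set A : L := algebraMap K L a with hAdef
  have hA0 : A ≠ 0 := hA.ne_zero (NeZero.ne ℓ)
  set V : Fin ℓ → Submodule E F := fun hh => Submodule.span E (Set.range (c hh)) with hV
  set w : Fin ℓ → ℕ := fun hh => Module.finrank E (V hh) with hw
  set bas : (hh : Fin ℓ) → Basis (Fin (w hh)) E (V hh) := fun hh => Module.finBasis E (V hh)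
    with hbas
  have memc : ∀ hh t, c hh t ∈ V hh := fun hh t => Submodule.subset_span ⟨t, rfl⟩
  set ε : (hh : Fin ℓ) → Fin (w hh) → F := fun hh e => ((bas hh e : V hh) : F) with hε
  set lam : (hh : Fin ℓ) → Fin m → Fin (w hh) → E :=
    fun hh t e => (bas hh).repr ⟨c hh t, memc hh t⟩ e with hlam
  have hcexp : ∀ hh t, c hh t = ∑ e, lam hh t e • ε hh e := by
    intro hh t
    have hsr := (bas hh).sum_repr ⟨c hh t, memc hh t⟩
    calc c hh t = ((⟨c hh t, memc hh t⟩ : V hh) : F) := rfl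
      _ = ∑ e, lam hh t e • ε hh e := by
          conv_lhs => rw [← hsr]
          rw [Submodule.coe_sum]; rfl
  set γ : (hh : Fin ℓ) → Fin (w hh) → L :=
    fun hh e => ∑ t : Fin m, algebraMap E L (lam hh t e) * (σ ^ (t : ℕ)) β with hγ
  set x : (hh : Fin ℓ) → Fin (w hh) → L :=
    fun hh e => algebraMap F L (ε hh e) * A ^ (b * (hh : ℤ)) with hx
  have hEKL : ∀ y : E, algebraMap E L y = algebraMap K L (algebraMap E K y) := by
    intro y; rw [IsScalarTower.algebraMap_apply E K L]
  have hEFL : ∀ y : E, algebraMap E L y = algebraMap F L (algebraMap E F y) := by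
    intro y; rw [IsScalarTower.algebraMap_apply E F L]
  -- ===== K-linear independence of the γ families =====
  have hind : ∀ hh, LinearIndependent K (γ hh) := by
    intro hh
    rw [Fintype.linearIndependent_iff]
    intro μ hμ
    have key : ∑ t : Fin m, (∑ e, μ e * algebraMap E K (lam hh t e)) • bb t = 0 := by
      calc ∑ t : Fin m, (∑ e, μ e * algebraMap E K (lam hh t e)) • bb t
          = ∑ t : Fin m, ∑ e, (μ e * algebraMap E K (lam hh t e)) • ((σ ^ (t : ℕ)) β) := by
            refine Finset.sum_congr rfl fun t _ => ?_
            rw [hbb t, Finset.sum_smul]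
        _ = ∑ e, ∑ t : Fin m, (μ e * algebraMap E K (lam hh t e)) • ((σ ^ (t : ℕ)) β) :=
            Finset.sum_comm
        _ = ∑ e, μ e • γ hh e := by
            refine Finset.sum_congr rfl fun e _ => ?_
            rw [hγ]
            simp only
            rw [Finset.smul_sum]
            refine Finset.sum_congr rfl fun t _ => ?_
            rw [Algebra.smul_def, Algebra.smul_def, map_mul, hEKL]
            ring
        _ = 0 := hμ
    have hcoef : ∀ t, (∑ e, μ e * algebraMap E K (lam hh t e)) = 0 :=
      Fintype.linearIndependent_iff.mp bb.linearIndependent _ key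
    intro e'
    obtain ⟨d, hd⟩ := (Submodule.mem_span_range_iff_exists_fun E).mp
      (show ε hh e' ∈ Submodule.span E (Set.range (c hh)) from (bas hh e').2)
    have hco : ∀ e, ∑ t, d t * lam hh t e = (Finsupp.single e' (1 : E)) e := by
      intro e
      have h2 : (bas hh e' : V hh) = ∑ t, d t • (⟨c hh t, memc hh t⟩ : V hh) := by
        apply Subtype.ext
        show ε hh e' = ((∑ t, d t • (⟨c hh t, memc hh t⟩ : V hh) : V hh) : F)
        rw [← hd]
        simp
      have h3 := congrArg (fun z => ((bas hh).repr z) e) h2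
      simp only [Basis.repr_self, map_sum, map_smul, Finsupp.coe_finset_sum, Finset.sum_apply,
        Finsupp.smul_apply, smul_eq_mul] at h3
      rw [← h3]
    have hmu : μ e' = ∑ t, algebraMap E K (d t) * (∑ e, μ e * algebraMap E K (lam hh t e)) := by
      calc μ e' = ∑ e, μ e * algebraMap E K ((Finsupp.single e' (1 : E)) e) := by
            rw [Finset.sum_congr rfl (fun e _ => by
              rw [Finsupp.single_apply, apply_ite (algebraMap E K), map_one, map_zero,
                mul_ite, mul_one, mul_zero])]
            rw [Finset.sum_ite_eq Finset.univ e' μ]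
            simp
        _ = ∑ e, μ e * algebraMap E K (∑ t, d t * lam hh t e) := by
            refine Finset.sum_congr rfl fun e _ => ?_
            rw [hco e]
        _ = ∑ e, ∑ t, μ e * (algebraMap E K (d t) * algebraMap E K (lam hh t e)) := by
            refine Finset.sum_congr rfl fun e _ => ?_
            rw [map_sum, Finset.mul_sum]
            refine Finset.sum_congr rfl fun t _ => ?_
            rw [map_mul]
        _ = ∑ t, algebraMap E K (d t) * (∑ e, μ e * algebraMap E K (lam hh t e)) := by
            rw [Finset.sum_comm]
            refine Finset.sum_congr rfl fun t _ => ?_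
            rw [Finset.mul_sum]
            refine Finset.sum_congr rfl fun e _ => ?_
            ring
    rw [hmu]
    refine Finset.sum_eq_zero fun t _ => ?_
    rw [hcoef t, mul_zero]
  -- ===== the grid equations =====
  have hfixAz : ∀ (τ : L ≃ₐ[K] L) (z : ℤ), τ (A ^ z) = A ^ z := by
    intro τ z
    rw [hAdef, ← map_zpow₀ (algebraMap K L) a z]
    exact τ.commutes _
  have EQmain : ∀ i s : ℕ, i + 2 ≤ δ → s ≤ r →
      ∑ hh : Fin ℓ, ∑ e : Fin (w hh),
        x hh e * A ^ (((i : ℤ) * t₁ + (s : ℤ) * t₂) * (hh : ℤ))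
          * (σ ^ ((i : ℤ) * t₁ + (s : ℤ) * t₂)) (γ hh e) = 0 := by
    intro i s hi hs
    have hiz : (i : ℤ) ≤ (δ : ℤ) - 2 := by
      have : (i : ℤ) + 2 ≤ (δ : ℤ) := by exact_mod_cast hi
      omega
    have H := hdef i hiz s hs c hcC
    set u : ℤ := (i : ℤ) * t₁ + (s : ℤ) * t₂ with hu
    have hbu : b + (i : ℤ) * t₁ + (s : ℤ) * t₂ = b + u := by rw [hu]; ring
    rw [hbu] at H
    have inner : ∀ hh : Fin ℓ,
        ∑ t : Fin m, algebraMap F L (c hh t) * (σ ^ u) ((σ ^ (t : ℕ)) β)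
        = ∑ e : Fin (w hh), algebraMap F L (ε hh e) * (σ ^ u) (γ hh e) := by
      intro hh
      calc ∑ t : Fin m, algebraMap F L (c hh t) * (σ ^ u) ((σ ^ (t : ℕ)) β)
          = ∑ t : Fin m, ∑ e : Fin (w hh),
              algebraMap E L (lam hh t e) * algebraMap F L (ε hh e)
                * (σ ^ u) ((σ ^ (t : ℕ)) β) := by
            refine Finset.sum_congr rfl fun t _ => ?_
            rw [hcexp hh t, map_sum, Finset.sum_mul]
            refine Finset.sum_congr rfl fun e _ => ?_
            rw [Algebra.smul_def, map_mul, ← hEFL]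
        _ = ∑ e : Fin (w hh), ∑ t : Fin m,
              algebraMap E L (lam hh t e) * algebraMap F L (ε hh e)
                * (σ ^ u) ((σ ^ (t : ℕ)) β) := Finset.sum_comm
        _ = ∑ e : Fin (w hh), algebraMap F L (ε hh e) * (σ ^ u) (γ hh e) := by
            refine Finset.sum_congr rfl fun e _ => ?_
            rw [hγ]
            simp only
            rw [map_sum, Finset.mul_sum]
            refine Finset.sum_congr rfl fun t _ => ?_
            rw [map_mul]
            have hfix : (σ ^ u) (algebraMap E L (lam hh t e)) = algebraMap E L (lam hh t e) := by
              rw [hEKL]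
              exact (σ ^ u).commutes _
            rw [hfix]
            ring
    have key : ∀ hh : Fin ℓ,
        ∑ t : Fin m, algebraMap F L (c hh t) * (σ ^ (t : ℕ)) ((σ ^ u) β)
          * (algebraMap K L (a ^ (b + u))) ^ (hh : ℕ)
        = ∑ e : Fin (w hh),
            x hh e * A ^ (u * (hh : ℤ)) * (σ ^ u) (γ hh e) := by
      intro hh
      have hAexp : (algebraMap K L (a ^ (b + u))) ^ (hh : ℕ) = A ^ ((b + u) * (hh : ℤ)) := by
        rw [map_zpow₀, ← hAdef, ← zpow_natCast (A ^ (b + u)) (hh : ℕ), ← zpow_mul]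
      have hcomm : ∀ t : Fin m, (σ ^ (t : ℕ)) ((σ ^ u) β) = (σ ^ u) ((σ ^ (t : ℕ)) β) := by
        intro t
        rw [← zpow_natCast σ (t : ℕ), ← AlgEquiv.mul_apply, ← AlgEquiv.mul_apply,
          ← zpow_add, ← zpow_add, add_comm]
      have hsplit : A ^ ((b + u) * (hh : ℤ)) = A ^ (b * (hh : ℤ)) * A ^ (u * (hh : ℤ)) := by
        rw [← zpow_add₀ hA0]; ring_nf
      calc ∑ t : Fin m, algebraMap F L (c hh t) * (σ ^ (t : ℕ)) ((σ ^ u) β)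
              * (algebraMap K L (a ^ (b + u))) ^ (hh : ℕ)
          = (∑ t : Fin m, algebraMap F L (c hh t) * (σ ^ u) ((σ ^ (t : ℕ)) β))
              * A ^ ((b + u) * (hh : ℤ)) := by
            rw [Finset.sum_mul]
            refine Finset.sum_congr rfl fun t _ => ?_
            rw [hAexp, hcomm t]
        _ = (∑ e : Fin (w hh), algebraMap F L (ε hh e) * (σ ^ u) (γ hh e))
              * A ^ ((b + u) * (hh : ℤ)) := by rw [inner hh]
        _ = ∑ e : Fin (w hh), x hh e * A ^ (u * (hh : ℤ)) * (σ ^ u) (γ hh e) := by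
            rw [Finset.sum_mul]
            refine Finset.sum_congr rfl fun e _ => ?_
            rw [hx]
            simp only
            rw [hsplit]
            ring
    calc ∑ hh : Fin ℓ, ∑ e : Fin (w hh),
          x hh e * A ^ (u * (hh : ℤ)) * (σ ^ u) (γ hh e)
        = ∑ hh : Fin ℓ, ∑ t : Fin m, algebraMap F L (c hh t) * (σ ^ (t : ℕ)) ((σ ^ u) β)
            * (algebraMap K L (a ^ (b + u))) ^ (hh : ℕ) := by
          exact (Finset.sum_congr rfl fun hh _ => (key hh)).symm
      _ = 0 := H
  -- ===== apply the main lemma =====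
  have hsupp : ∃ S : Finset ((_ : Fin ℓ) × ℕ), S.card < δ + r ∧
      ∀ hh : Fin ℓ, ∀ k : Fin (w hh), (⟨hh, (k : ℕ)⟩ : (_ : Fin ℓ) × ℕ) ∉ S → x hh k = 0 := by
    refine ⟨Finset.univ.sigma (fun hh => Finset.range (w hh)), ?_, ?_⟩
    · have hc : (Finset.univ.sigma (fun hh => Finset.range (w hh))).card = ∑ hh, w hh := by
        rw [Finset.card_sigma]
        simp
      rw [hc]
      have hsr : srWt E c = ∑ hh, w hh := by
        unfold srWt rankWt
        rfl
      rw [← hsr]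
      exact hlt
    · intro hh k hk
      exfalso
      apply hk
      rw [Finset.mem_sigma]
      exact ⟨Finset.mem_univ hh, Finset.mem_range.mpr k.isLt⟩
  have happ := ht_main σ hσgen hA hlm' t₁ t₂ h1l h1m δ hδ' r w x γ hind hsupp EQmain
  -- ===== contradiction =====
  have hex : ∃ hh t, c hh t ≠ 0 := by
    by_contra hno
    push_neg at hno
    exact hc0 (funext fun hh => funext fun t => hno hh t)
  obtain ⟨h₀, t₀, hct⟩ := hex
  have hwpos : 0 < w h₀ := by
    by_contra h0
    push_neg at h0
    have h00 : w h₀ = 0 := by omega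
    rw [hw] at h00
    simp only at h00
    have hsp := Submodule.finrank_eq_zero.mp h00
    have : c h₀ t₀ ∈ (⊥ : Submodule E F) := by
      rw [← hsp]
      exact memc h₀ t₀
    exact hct (by simpa using this)
  have hεne : ε h₀ ⟨0, hwpos⟩ ≠ 0 := by
    intro h0
    have := (bas h₀).ne_zero ⟨0, hwpos⟩
    exact this (Subtype.ext (by simpa [hε] using h0))
  have hxne : x h₀ ⟨0, hwpos⟩ ≠ 0 := by
    rw [hx]
    simp only
    apply mul_ne_zero
    · intro h0
      exact hεne ((algebraMap F L).injective (by rw [h0, map_zero]))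
    · exact zpow_ne_zero _ hA0
  exact hxne (happ h₀ ⟨0, hwpos⟩)
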